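/- Let ω : [0,1) → [0,∞) be integrable (viewed as a radial weight) and set ω̂(r) = ∫_r^1 ω(s) ds. Suppose there exists β > 0 and a constant C > 0 such that ω̂(r)/(1-r)^β ≤ C ω̂(t)/(1-t)^β for all 0 ≤ r ≤ t < 1. Then for every ε > 0 there exists a constant C' > 0 such that ∫₀^t ω(s)/(1-s)^{β+ε} ds ≤ C' ω̂(t)/(1-t)^{β+ε} for all 0 ≤ t < 1. -/

import Mathlib

open MeasureTheory

/-- Interval integrability of ω on subintervals of [0,1]. -/
private lemma omega_ii {ω : ℝ → ℝ} (hint : IntegrableOn ω (Set.Ico (0:ℝ) 1))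
    {a b : ℝ} (ha : 0 ≤ a) (hab : a ≤ b) (hb : b ≤ 1) :
    IntervalIntegrable ω MeasureTheory.volume a b := by
  rw [intervalIntegrable_iff_integrableOn_Ioc_of_le hab]
  have h1 : IntegrableOn ω (Set.Ico a b) := hint.mono_set (fun x hx =>
    ⟨le_trans ha hx.1, lt_of_lt_of_le hx.2 hb⟩)
  exact h1.congr_set_ae (Ioc_ae_eq_Icc.trans Ico_ae_eq_Icc.symm)

/-- FTC computation: ∫_a^b c (1-u)^(-c-1) du = (1-b)^(-c) - (1-a)^(-c). -/
private lemma ftc_pow (c : ℝ) {a b : ℝ} (hab : a ≤ b) (hb : b < 1) :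
    (∫ u in a..b, c * (1-u) ^ (-c-1)) = (1-b) ^ (-c) - (1-a) ^ (-c) := by
  have key : ∀ u ∈ Set.uIcc a b, HasDerivAt (fun x : ℝ => (1-x) ^ (-c))
      (c * (1-u) ^ (-c-1)) u := by
    intro u hu
    rw [Set.uIcc_of_le hab] at hu
    have h1u : (0:ℝ) < 1 - u := by linarith [hu.2]
    have hd : HasDerivAt (fun x : ℝ => 1 - x) (-1) u := by
      simpa using (hasDerivAt_id u).const_sub 1
    have := (Real.hasDerivAt_rpow_const (x := 1-u) (p := -c) (Or.inl h1u.ne')).comp u hd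
    exact this.congr_deriv (by ring)
  have hcont : ContinuousOn (fun u : ℝ => c * (1-u) ^ (-c-1)) (Set.uIcc a b) := by
    refine continuousOn_const.mul (ContinuousOn.rpow_const
      ((continuous_const.sub continuous_id).continuousOn) ?_)
    intro u hu
    rw [Set.uIcc_of_le hab] at hu
    have h1u : (0:ℝ) < 1 - u := by linarith [hu.2]
    exact Or.inl h1u.ne'
  rw [intervalIntegral.integral_eq_sub_of_hasDerivAt key hcont.intervalIntegrable]

/-- Fubini step: swap the triangle integral. -/
private lemma fubini_step (ω g : ℝ → ℝ) (hω : ∀ s, 0 ≤ ω s)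
    (hint : IntegrableOn ω (Set.Ico (0:ℝ) 1))
    {t : ℝ} (hg : AEStronglyMeasurable g (volume.restrict (Set.Ioc (0:ℝ) t)))
    (ht0 : 0 < t) (ht1 : t < 1)
    (M' : ℝ) (hgM' : ∀ u ∈ Set.Ioc (0:ℝ) t, |g u| ≤ M') :
    (∫ s in (0:ℝ)..t, ω s * ∫ u in (0:ℝ)..s, g u)
      = ∫ u in (0:ℝ)..t, g u * ∫ s in u..t, ω s := by
  set μ := volume.restrict (Set.Ioc (0:ℝ) t) with hμ
  haveI : IsFiniteMeasure μ := by
    constructor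
    rw [hμ, Measure.restrict_apply_univ]
    exact measure_Ioc_lt_top
  have hsub : Set.Ioc (0:ℝ) t ⊆ Set.Ico (0:ℝ) 1 := fun x hx =>
    ⟨hx.1.le, lt_of_le_of_lt hx.2 ht1⟩
  have hωint : Integrable ω μ := hint.mono_set hsub
  have hωA : AEStronglyMeasurable ω μ := hωint.aestronglyMeasurable
  set f : ℝ → ℝ → ℝ := fun s u => if u ≤ s then ω s * g u else 0 with hf
  have hM'0 : 0 ≤ M' := le_trans (abs_nonneg _) (hgM' t ⟨ht0, le_refl t⟩)
  have hae : ∀ᵐ p ∂(μ.prod μ), p ∈ Set.Ioc (0:ℝ) t ×ˢ Set.Ioc (0:ℝ) t := by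
    rw [hμ, Measure.prod_restrict]
    exact ae_restrict_mem (measurableSet_Ioc.prod measurableSet_Ioc)
  have hf_aesm : AEStronglyMeasurable (Function.uncurry f) (μ.prod μ) := by
    have heq : Function.uncurry f = fun p : ℝ × ℝ =>
        Set.indicator {p : ℝ × ℝ | p.2 ≤ p.1} (fun p => ω p.1 * g p.2) p := by
      ext p
      simp only [Function.uncurry, hf, Set.indicator_apply, Set.mem_setOf_eq]
    rw [heq]
    exact (hωA.comp_fst.mul hg.comp_snd).indicator
      (measurableSet_le measurable_snd measurable_fst)
  have hf_int : Integrable (Function.uncurry f) (μ.prod μ) := by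
    refine Integrable.mono' (hωint.mul_prod (integrable_const M')) hf_aesm ?_
    filter_upwards [hae] with p hp
    have h2 : |g p.2| ≤ M' := hgM' p.2 hp.2
    have h1 : 0 ≤ ω p.1 := hω p.1
    simp only [Function.uncurry, hf]
    by_cases hle : p.2 ≤ p.1
    · simp only [hle, if_true]
      rw [Real.norm_eq_abs, abs_mul, abs_of_nonneg h1]
      exact mul_le_mul_of_nonneg_left h2 h1
    · simp only [hle, if_false, norm_zero]
      positivity
  have hswap := integral_integral_swap hf_int
  have hLHS : (∫ s, ∫ u, f s u ∂μ ∂μ) = ∫ s in (0:ℝ)..t, ω s * ∫ u in (0:ℝ)..s, g u := by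
    rw [intervalIntegral.integral_of_le ht0.le, hμ]
    refine setIntegral_congr_ae measurableSet_Ioc ?_
    filter_upwards with s hs
    have heq : ∀ u, f s u = ω s * Set.indicator (Set.Iic s) g u := by
      intro u
      simp only [hf, Set.indicator_apply, Set.mem_Iic, mul_ite, mul_zero]
    simp_rw [heq]
    rw [integral_const_mul, setIntegral_indicator measurableSet_Iic]
    have hset : Set.Ioc (0:ℝ) t ∩ Set.Iic s = Set.Ioc 0 s := by
      ext x
      simp only [Set.mem_inter_iff, Set.mem_Ioc, Set.mem_Iic]
      constructor
      · rintro ⟨⟨h1, _⟩, h3⟩; exact ⟨h1, h3⟩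
      · rintro ⟨h1, h2⟩; exact ⟨⟨h1, le_trans h2 hs.2⟩, h2⟩
    rw [hset, intervalIntegral.integral_of_le hs.1.le]
  have hRHS : (∫ u, ∫ s, f s u ∂μ ∂μ) = ∫ u in (0:ℝ)..t, g u * ∫ s in u..t, ω s := by
    rw [intervalIntegral.integral_of_le ht0.le, hμ]
    refine setIntegral_congr_ae measurableSet_Ioc ?_
    filter_upwards with u hu
    have heq : ∀ s, f s u = g u * Set.indicator (Set.Ici u) ω s := by
      intro s
      simp only [hf, Set.indicator_apply, Set.mem_Ici]
      by_cases hle : u ≤ s <;> simp [hle, mul_comm]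
    simp_rw [heq]
    rw [integral_const_mul, setIntegral_indicator measurableSet_Ici]
    have hset : Set.Ioc (0:ℝ) t ∩ Set.Ici u = Set.Icc u t := by
      ext x
      simp only [Set.mem_inter_iff, Set.mem_Ioc, Set.mem_Icc, Set.mem_Ici]
      constructor
      · rintro ⟨⟨_, h2⟩, h3⟩; exact ⟨h3, h2⟩
      · rintro ⟨h1, h2⟩; exact ⟨⟨lt_of_lt_of_le hu.1 h1, h2⟩, h1⟩
    rw [hset, integral_Icc_eq_integral_Ioc, intervalIntegral.integral_of_le hu.2]
  rw [← hLHS, ← hRHS]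
  exact hswap

theorem doubling_tail_to_integral (ω : ℝ → ℝ) (hω : ∀ s, 0 ≤ ω s)
    (hint : IntegrableOn ω (Set.Ico (0:ℝ) 1))
    (β C : ℝ) (hβ : 0 < β) (hC : 0 < C)
    (h : ∀ r t : ℝ, 0 ≤ r → r ≤ t → t < 1 →
      (∫ s in r..1, ω s) / (1 - r) ^ β ≤ C * ((∫ s in t..1, ω s) / (1 - t) ^ β)) :
    ∀ ε : ℝ, 0 < ε → ∃ C' : ℝ, 0 < C' ∧ ∀ t : ℝ, 0 ≤ t → t < 1 →
      (∫ s in (0:ℝ)..t, ω s / (1 - s) ^ (β + ε)) ≤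
        C' * ((∫ s in t..1, ω s) / (1 - t) ^ (β + ε)) := by
  intro ε hε
  refine ⟨C * (1 + (β + ε) / ε), by positivity, ?_⟩
  intro t ht0 ht1
  set γ := β + ε with hγdef
  have hγ : 0 < γ := by positivity
  have h1t : (0:ℝ) < 1 - t := by linarith
  set A := (∫ s in t..1, ω s) with hA
  have hA0 : 0 ≤ A := intervalIntegral.integral_nonneg ht1.le (fun s _ => hω s)
  have hRHS0 : 0 ≤ C * (1 + γ / ε) * (A / (1-t) ^ γ) := by positivity
  rcases eq_or_lt_of_le ht0 with rfl | htpos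
  · rw [intervalIntegral.integral_same]
    exact hRHS0
  -- now 0 < t
  set D := C * (A / (1-t) ^ β) with hD
  have hD0 : 0 ≤ D := by positivity
  -- tail bound: for 0 ≤ u ≤ t, ∫_u^1 ω ≤ D * (1-u)^β
  have htail : ∀ u, 0 ≤ u → u ≤ t → (∫ s in u..1, ω s) ≤ D * (1-u) ^ β := by
    intro u hu0 hut
    have h1u : (0:ℝ) < 1 - u := by linarith
    have := h u t hu0 hut ht1
    rw [div_le_iff₀ (Real.rpow_pos_of_pos h1u β)] at this
    calc (∫ s in u..1, ω s) ≤ C * (A / (1-t) ^ β) * (1-u) ^ β := this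
    _ = D * (1-u) ^ β := by rw [hD]
  -- ∫_u^t ω ≤ ∫_u^1 ω
  have hcut : ∀ u, 0 ≤ u → u ≤ t → (∫ s in u..t, ω s) ≤ ∫ s in u..1, ω s := by
    intro u hu0 hut
    have h1 := omega_ii hint hu0 hut ht1.le
    have h2 := omega_ii hint (le_trans hu0 hut) ht1.le le_rfl
    have hadd := intervalIntegral.integral_add_adjacent_intervals h1 h2
    have h3 : 0 ≤ ∫ s in t..1, ω s := intervalIntegral.integral_nonneg ht1.le (fun s _ => hω s)
    linarith
  set g : ℝ → ℝ := fun u => γ * (1-u) ^ (-γ-1) with hg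
  have hgcont : ContinuousOn g (Set.Icc (0:ℝ) t) := by
    refine continuousOn_const.mul (ContinuousOn.rpow_const
      ((continuous_const.sub continuous_id).continuousOn) ?_)
    intro u hu
    have : (0:ℝ) < 1 - u := by linarith [hu.2]
    exact Or.inl this.ne'
  have hgaesm : AEStronglyMeasurable g (volume.restrict (Set.Ioc (0:ℝ) t)) := by
    refine AEStronglyMeasurable.mono_measure ?_
      (Measure.restrict_mono Set.Ioc_subset_Icc_self le_rfl)
    exact (hgcont.aestronglyMeasurable measurableSet_Icc)
  -- Step 1: rewrite the integrand
  have step1 : (∫ s in (0:ℝ)..t, ω s / (1 - s) ^ γ)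
      = (∫ s in (0:ℝ)..t, ω s) + ∫ s in (0:ℝ)..t, ω s * ((1-s) ^ (-γ) - 1) := by
    rw [← intervalIntegral.integral_add (omega_ii hint le_rfl ht0 ht1.le) ?_]
    · apply intervalIntegral.integral_congr
      intro s hs
      rw [Set.uIcc_of_le ht0] at hs
      have h1s : (0:ℝ) < 1 - s := by linarith [hs.2]
      show ω s / (1 - s) ^ γ = ω s + ω s * ((1-s) ^ (-γ) - 1)
      rw [Real.rpow_neg h1s.le, div_eq_mul_inv]
      ring
    · -- integrability of ω s * ((1-s)^(-γ) - 1)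
      rw [intervalIntegrable_iff_integrableOn_Ioc_of_le ht0]
      have hωint : Integrable ω (volume.restrict (Set.Ioc (0:ℝ) t)) :=
        (intervalIntegrable_iff_integrableOn_Ioc_of_le ht0).mp
          (omega_ii hint le_rfl ht0 ht1.le)
      refine Integrable.mono' (hωint.mul_const ((1-t) ^ (-γ))) ?_ ?_
      · refine hωint.aestronglyMeasurable.mul ?_
        have hc : ContinuousOn (fun s : ℝ => (1-s) ^ (-γ) - 1) (Set.Ioc (0:ℝ) t) := by
          refine ContinuousOn.sub (ContinuousOn.rpow_const
            ((continuous_const.sub continuous_id).continuousOn) ?_) continuousOn_const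
          intro u hu
          have : (0:ℝ) < 1 - u := by linarith [hu.2]
          exact Or.inl this.ne'
        exact hc.aestronglyMeasurable measurableSet_Ioc
      · filter_upwards [ae_restrict_mem measurableSet_Ioc] with s hs
        have h1s : (0:ℝ) < 1 - s := by linarith [hs.2]
        have hb1 : (1:ℝ) ≤ (1-s) ^ (-γ) := by
          have h' := Real.rpow_le_rpow_of_nonpos h1s
            (by linarith [hs.1] : 1 - s ≤ 1) (by linarith : -γ ≤ 0)
          rwa [Real.one_rpow] at h'
        have hb2 : (1-s) ^ (-γ) ≤ (1-t) ^ (-γ) :=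
          Real.rpow_le_rpow_of_nonpos h1t (by linarith [hs.2]) (by linarith)
        rw [Real.norm_eq_abs, abs_mul, abs_of_nonneg (hω s),
          abs_of_nonneg (by linarith : (0:ℝ) ≤ (1-s) ^ (-γ) - 1)]
        have := hω s
        nlinarith
  -- Step 2: express (1-s)^(-γ) - 1 as integral and apply Fubini
  have step2 : (∫ s in (0:ℝ)..t, ω s * ((1-s) ^ (-γ) - 1))
      = ∫ u in (0:ℝ)..t, g u * ∫ s in u..t, ω s := by
    rw [← fubini_step ω g hω hint hgaesm htpos ht1
      (γ * (1-t) ^ (-γ-1)) ?_]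
    · apply intervalIntegral.integral_congr
      intro s hs
      rw [Set.uIcc_of_le ht0] at hs
      have hftc := ftc_pow γ hs.1 (lt_of_le_of_lt hs.2 ht1)
      rw [show (1:ℝ) - 0 = 1 by ring, Real.one_rpow] at hftc
      show ω s * ((1-s) ^ (-γ) - 1) = ω s * ∫ u in (0:ℝ)..s, g u
      rw [← hftc]
    · intro u hu
      have h1u : (0:ℝ) < 1 - u := by linarith [hu.2]
      rw [hg, abs_mul, abs_of_nonneg hγ.le, abs_of_nonneg (Real.rpow_nonneg h1u.le _)]
      exact mul_le_mul_of_nonneg_left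
        (Real.rpow_le_rpow_of_nonpos h1t (by linarith [hu.2]) (by linarith)) hγ.le
  -- Step 3: bound the swapped integral
  have step3 : (∫ u in (0:ℝ)..t, g u * ∫ s in u..t, ω s)
      ≤ (D * γ / ε) * (1-t) ^ (-ε) := by
    have hcont_g := hgcont
    have hprim : ContinuousOn (fun u => ∫ s in u..t, ω s) (Set.Icc (0:ℝ) t) := by
      have hii : IntegrableOn ω (Set.uIcc (0:ℝ) t) := by
        rw [Set.uIcc_of_le ht0]
        have h1 : IntegrableOn ω (Set.Ico (0:ℝ) t) :=
          hint.mono_set (fun x hx => ⟨hx.1, lt_trans hx.2 ht1⟩)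
        exact h1.congr_set_ae Ico_ae_eq_Icc.symm
      have := intervalIntegral.continuousOn_primitive_interval_left hii
      rwa [Set.uIcc_of_le ht0] at this
    have hbound : ∀ u ∈ Set.Icc (0:ℝ) t,
        g u * (∫ s in u..t, ω s) ≤ (D * γ / ε) * (ε * (1-u) ^ (-ε-1)) := by
      intro u hu
      have h1u : (0:ℝ) < 1 - u := by linarith [hu.2]
      have hg0 : 0 ≤ g u := by
        have h1u' : (0:ℝ) ≤ (1-u) ^ (-γ-1) := Real.rpow_nonneg h1u.le _
        rw [hg]
        positivity
      have hb : (∫ s in u..t, ω s) ≤ D * (1-u) ^ β :=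
        le_trans (hcut u hu.1 hu.2) (htail u hu.1 hu.2)
      calc g u * (∫ s in u..t, ω s) ≤ g u * (D * (1-u) ^ β) :=
            mul_le_mul_of_nonneg_left hb hg0
        _ = (D * γ / ε) * (ε * (1-u) ^ (-ε-1)) := by
            show γ * (1-u) ^ (-γ-1) * (D * (1-u) ^ β) = (D * γ / ε) * (ε * (1-u) ^ (-ε-1))
            rw [show (-γ-1 : ℝ) = (-ε-1) + (-β) by rw [hγdef]; ring,
              Real.rpow_add h1u, Real.rpow_neg h1u.le β]
            field_simp
    have hInt1 : IntervalIntegrable (fun u => g u * ∫ s in u..t, ω s) volume 0 t := by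
      have hcc : ContinuousOn (fun u => g u * ∫ s in u..t, ω s) (Set.Icc (0:ℝ) t) :=
        hcont_g.mul hprim
      rw [show Set.Icc (0:ℝ) t = Set.uIcc 0 t from (Set.uIcc_of_le ht0).symm] at hcc
      exact hcc.intervalIntegrable

    have hInt2 : IntervalIntegrable (fun u => (D * γ / ε) * (ε * (1-u) ^ (-ε-1))) volume 0 t := by
      apply ContinuousOn.intervalIntegrable
      rw [Set.uIcc_of_le ht0]
      refine continuousOn_const.mul (continuousOn_const.mul
        (ContinuousOn.rpow_const ((continuous_const.sub continuous_id).continuousOn) ?_))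
      intro u hu
      have : (0:ℝ) < 1 - u := by linarith [hu.2]
      exact Or.inl this.ne'
    calc (∫ u in (0:ℝ)..t, g u * ∫ s in u..t, ω s)
        ≤ ∫ u in (0:ℝ)..t, (D * γ / ε) * (ε * (1-u) ^ (-ε-1)) :=
          intervalIntegral.integral_mono_on ht0 hInt1 hInt2 hbound
      _ = (D * γ / ε) * ((1-t) ^ (-ε) - (1 - 0) ^ (-ε)) := by
          rw [intervalIntegral.integral_const_mul, ftc_pow ε ht0 ht1]
      _ ≤ (D * γ / ε) * (1-t) ^ (-ε) := by
          have h1 : (0:ℝ) ≤ D * γ / ε := by positivity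
          have h2 : (0:ℝ) ≤ ((1:ℝ) - 0) ^ (-ε) := Real.rpow_nonneg (by norm_num) _
          nlinarith [mul_nonneg h1 h2]
  -- Step 4: bound ∫_0^t ω ≤ D
  have step4 : (∫ s in (0:ℝ)..t, ω s) ≤ D := by
    have h1 := h 0 t le_rfl ht0 ht1
    rw [show (1:ℝ) - 0 = 1 by ring, Real.one_rpow, div_one] at h1
    calc (∫ s in (0:ℝ)..t, ω s) ≤ ∫ s in (0:ℝ)..1, ω s := hcut 0 le_rfl ht0
      _ ≤ C * (A / (1-t) ^ β) := h1
      _ = D := hD.symm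
  -- Combine
  have key : (1-t) ^ (-β) * (1-t) ^ (-ε) = (1-t) ^ (-γ) := by
    rw [← Real.rpow_add h1t, hγdef]; ring_nf
  have hDγ : D * (1-t) ^ (-ε) = C * A * (1-t) ^ (-γ) := by
    rw [hD, div_eq_mul_inv, ← Real.rpow_neg h1t.le, ← key]; ring
  have hDle : D ≤ C * A * (1-t) ^ (-γ) := by
    have hmono : (1-t) ^ (-β) ≤ (1-t) ^ (-γ) :=
      Real.rpow_le_rpow_of_exponent_ge h1t (by linarith) (by linarith)
    calc D = C * A * (1-t) ^ (-β) := by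
          rw [hD, div_eq_mul_inv, ← Real.rpow_neg h1t.le]; ring
      _ ≤ C * A * (1-t) ^ (-γ) :=
          mul_le_mul_of_nonneg_left hmono (by positivity)
  have final : (∫ s in (0:ℝ)..t, ω s / (1 - s) ^ γ)
      ≤ C * (1 + γ / ε) * (A * (1-t) ^ (-γ)) := by
    rw [step1, step2]
    have hstep : D * γ / ε * (1-t) ^ (-ε) = (γ/ε) * (C * A * (1-t) ^ (-γ)) := by
      rw [show D * γ / ε * (1-t) ^ (-ε) = (γ/ε) * (D * (1-t) ^ (-ε)) by ring, hDγ]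
    nlinarith [step3, step4]
  calc (∫ s in (0:ℝ)..t, ω s / (1 - s) ^ γ)
      ≤ C * (1 + γ / ε) * (A * (1-t) ^ (-γ)) := final
    _ = C * (1 + γ / ε) * (A / (1-t) ^ γ) := by
        rw [Real.rpow_neg h1t.le]
        ring
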